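/- Let α > −1 and β > 0, and let m ∈ ℕ. Then ∫_0^∞ L_m^{(α)}(x) x^β e^{−x} dx = Γ(1+β) · (α − β)_m / m!, where (z)_k = z(z+1)⋯(z+k−1) is the Pochhammer symbol. -/

import Mathlib

/-- The generalized Laguerre polynomial
`L_n^{(α)}(x) = ∑_{k=0}^{n} (−1)^k (Γ(n+α+1)/(Γ(k+α+1)(n−k)! k!)) x^k`. -/
noncomputable def laguerreL (α : ℝ) (n : ℕ) (x : ℝ) : ℝ :=
  ∑ k ∈ Finset.range (n + 1),
    (-1 : ℝ) ^ k * (Real.Gamma ((n : ℝ) + α + 1) /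
      (Real.Gamma ((k : ℝ) + α + 1) * (Nat.factorial (n - k)) * (Nat.factorial k))) * x ^ k

open MeasureTheory

open Finset in
private lemma laguerre_key (m : ℕ) : ∀ α β : ℝ, -1 < α → -1 < β →
    ∑ k ∈ range (m+1), (-1:ℝ)^k * (m.choose k) * (Real.Gamma (β+1+k) / Real.Gamma (α+1+k))
      = (ascPochhammer ℝ m).eval (α - β) * Real.Gamma (β+1) / Real.Gamma (α+1+m) := by
  induction m with
  | zero => intro α β hα hβ; simp
  | succ m ih =>
    intro α β hα hβ
    have hm : (0:ℝ) ≤ m := Nat.cast_nonneg m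
    have hαm : (0:ℝ) < α+1+m := by linarith
    have hβ1 : (0:ℝ) < β+1 := by linarith
    have h1 : ∑ k ∈ range (m+2), (-1:ℝ)^k * ((m+1).choose k) * (Real.Gamma (β+1+k) / Real.Gamma (α+1+k))
        = (∑ k ∈ range (m+1), (-1:ℝ)^k * (m.choose k) * (Real.Gamma (β+1+k) / Real.Gamma (α+1+k)))
          - ∑ j ∈ range (m+1), (-1:ℝ)^j * (m.choose j) * (Real.Gamma ((β+1)+1+j) / Real.Gamma ((α+1)+1+j)) := by
      have h2 : (∑ j ∈ range (m+1), (-1:ℝ)^(j+1) * (m.choose (j+1)) * (Real.Gamma (β+1+(j+1:ℕ)) / Real.Gamma (α+1+(j+1:ℕ))))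
            + (-1:ℝ)^0 * (m.choose 0) * (Real.Gamma (β+1+((0:ℕ):ℝ)) / Real.Gamma (α+1+((0:ℕ):ℝ)))
          = ∑ k ∈ range (m+2), (-1:ℝ)^k * (m.choose k) * (Real.Gamma (β+1+k) / Real.Gamma (α+1+k)) := by
        rw [Finset.sum_range_succ' (fun k => (-1:ℝ)^k * (m.choose k) * (Real.Gamma (β+1+k) / Real.Gamma (α+1+k))) (m+1)]
      have h3 : ∑ k ∈ range (m+2), (-1:ℝ)^k * (m.choose k) * (Real.Gamma (β+1+k) / Real.Gamma (α+1+k))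
          = ∑ k ∈ range (m+1), (-1:ℝ)^k * (m.choose k) * (Real.Gamma (β+1+k) / Real.Gamma (α+1+k)) := by
        rw [Finset.sum_range_succ]
        simp
      rw [Finset.sum_range_succ' _ (m+1)]
      have hc : ∀ j ∈ range (m+1), (-1:ℝ)^(j+1) * ((m+1).choose (j+1)) * (Real.Gamma (β+1+(j+1:ℕ)) / Real.Gamma (α+1+(j+1:ℕ)))
          = (-1:ℝ)^(j+1) * (m.choose (j+1)) * (Real.Gamma (β+1+(j+1:ℕ)) / Real.Gamma (α+1+(j+1:ℕ)))
            - (-1:ℝ)^j * (m.choose j) * (Real.Gamma ((β+1)+1+j) / Real.Gamma ((α+1)+1+j)) := by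
        intro j hj
        have e1 : β+1+((j+1:ℕ):ℝ) = (β+1)+1+j := by push_cast; ring
        have e2 : α+1+((j+1:ℕ):ℝ) = (α+1)+1+j := by push_cast; ring
        rw [e1, e2, Nat.choose_succ_succ]
        push_cast
        ring
      rw [Finset.sum_congr rfl hc, Finset.sum_sub_distrib]
      have hfirst : (-1:ℝ)^0 * ((m+1).choose 0) * (Real.Gamma (β+1+((0:ℕ):ℝ)) / Real.Gamma (α+1+((0:ℕ):ℝ)))
          = (-1:ℝ)^0 * (m.choose 0) * (Real.Gamma (β+1+((0:ℕ):ℝ)) / Real.Gamma (α+1+((0:ℕ):ℝ))) := by simp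
      rw [hfirst]
      linarith [h2, h3]
    rw [h1, ih α β hα hβ, ih (α+1) (β+1) (by linarith) (by linarith)]
    have hsame : (α+1) - (β+1) = α - β := by ring
    rw [hsame]
    have hg1 : Real.Gamma (α+1+((m+1:ℕ):ℝ)) = (α+1+m) * Real.Gamma (α+1+m) := by
      push_cast
      rw [show α+1+((m:ℝ)+1) = (α+1+m)+1 by ring, Real.Gamma_add_one (ne_of_gt hαm)]
    have hg2 : Real.Gamma ((α+1)+1+m) = (α+1+m) * Real.Gamma (α+1+m) := by
      rw [show (α+1)+1+(m:ℝ) = (α+1+m)+1 by ring, Real.Gamma_add_one (ne_of_gt hαm)]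
    have hg3 : Real.Gamma ((β+1)+1) = (β+1) * Real.Gamma (β+1) := Real.Gamma_add_one (ne_of_gt hβ1)
    have hp : (ascPochhammer ℝ (m+1)).eval (α - β) = (ascPochhammer ℝ m).eval (α-β) * (α - β + m) := by
      rw [ascPochhammer_succ_right]
      simp [Polynomial.eval_mul]
    rw [hp, hg1, hg2, hg3]
    have hne : Real.Gamma (α+1+m) ≠ 0 := ne_of_gt (Real.Gamma_pos_of_pos hαm)
    field_simp
    ring

open Finset in
/-- For `α > −1`, `β > 0` and `m ∈ ℕ`:
`∫_0^∞ L_m^{(α)}(x) x^β e^{−x} dx = Γ(1+β)·(α−β)_m / m!`, where `(z)_k` is the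
Pochhammer symbol `z(z+1)⋯(z+k−1)`. -/
theorem laguerre_weighted_integral (α β : ℝ) (hα : -1 < α) (hβ : 0 < β) (m : ℕ) :
    ∫ x in Set.Ioi (0 : ℝ), laguerreL α m x * x ^ β * Real.exp (-x)
      = Real.Gamma (1 + β) * (ascPochhammer ℝ m).eval (α - β) / Nat.factorial m := by
  have hint : ∀ k : ℕ, IntegrableOn (fun x : ℝ => Real.exp (-x) * x ^ ((k:ℝ)+β)) (Set.Ioi 0) := by
    intro k
    have h := Real.GammaIntegral_convergent (s := (k:ℝ)+β+1) (by positivity)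
    simpa using h
  have hval : ∀ k : ℕ, ∫ x in Set.Ioi (0:ℝ), Real.exp (-x) * x ^ ((k:ℝ)+β)
      = Real.Gamma ((k:ℝ)+β+1) := by
    intro k
    rw [Real.Gamma_eq_integral (by positivity)]
    norm_num
  have hEq : Set.EqOn (fun x => laguerreL α m x * x ^ β * Real.exp (-x))
      (fun x => ∑ k ∈ range (m+1), ((-1:ℝ)^k * (Real.Gamma ((m:ℝ)+α+1) /
        (Real.Gamma ((k:ℝ)+α+1) * (Nat.factorial (m-k)) * (Nat.factorial k)))) *
        (Real.exp (-x) * x ^ ((k:ℝ)+β))) (Set.Ioi 0) := by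
    intro x hx
    have hx0 : (0:ℝ) < x := hx
    simp only [laguerreL, Finset.sum_mul]
    apply Finset.sum_congr rfl
    intro k hk
    rw [Real.rpow_add hx0, Real.rpow_natCast]
    ring
  rw [setIntegral_congr_fun measurableSet_Ioi hEq,
    integral_finset_sum _ (fun k _ => ((hint k).const_mul _))]
  simp_rw [MeasureTheory.integral_const_mul, hval]
  have hkey := laguerre_key m α β hα (by linarith)
  have hstep : ∑ k ∈ range (m+1), ((-1:ℝ)^k * (Real.Gamma ((m:ℝ)+α+1) /
        (Real.Gamma ((k:ℝ)+α+1) * (Nat.factorial (m-k)) * (Nat.factorial k)))) *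
        Real.Gamma ((k:ℝ)+β+1)
      = (Real.Gamma ((m:ℝ)+α+1) / (Nat.factorial m)) *
        ∑ k ∈ range (m+1), (-1:ℝ)^k * (m.choose k) * (Real.Gamma (β+1+k) / Real.Gamma (α+1+k)) := by
    rw [Finset.mul_sum]
    apply Finset.sum_congr rfl
    intro k hk
    have hkm : k ≤ m := Nat.lt_succ_iff.mp (Finset.mem_range.mp hk)
    have hch : (m.choose k : ℝ) * (Nat.factorial k) * (Nat.factorial (m-k)) = Nat.factorial m := by
      exact_mod_cast congrArg (Nat.cast (R := ℝ)) (Nat.choose_mul_factorial_mul_factorial hkm)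
    have e1 : (k:ℝ)+α+1 = α+1+k := by ring
    have e2 : (k:ℝ)+β+1 = β+1+k := by ring
    rw [e1, e2]
    have hk0 : (0:ℝ) ≤ k := Nat.cast_nonneg k
    have hγ : Real.Gamma (α+1+k) ≠ 0 :=
      ne_of_gt (Real.Gamma_pos_of_pos (by linarith))
    have hf1 : (Nat.factorial k : ℝ) ≠ 0 := by positivity
    have hf2 : (Nat.factorial (m-k) : ℝ) ≠ 0 := by positivity
    have hf3 : (Nat.factorial m : ℝ) ≠ 0 := by positivity
    field_simp
    linear_combination (-Real.Gamma ((m:ℝ)+α+1)) * hch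
  rw [hstep, hkey]
  have e3 : (m:ℝ)+α+1 = α+1+m := by ring
  have e4 : (1:ℝ)+β = β+1 := by ring
  rw [e3, e4]
  have hm0 : (0:ℝ) ≤ m := Nat.cast_nonneg m
  have hγ : Real.Gamma (α+1+m) ≠ 0 :=
    ne_of_gt (Real.Gamma_pos_of_pos (by linarith))
  have hf3 : (Nat.factorial m : ℝ) ≠ 0 := by positivity
  field_simp
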